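/- Let χ be a primitive Dirichlet character modulo p^k (p prime, k ≥ 1) and let b be an integer with p^i || b where i ≤ k − 2. Then ∑_{a mod p^k} χ(a) · conj(χ(a + b)) = 0. -/

import Mathlib

open Finset

section aux

variable {p k : ℕ}

private lemma zmod_dvd_iff_nonunit (hp : p.Prime) (hk : 1 ≤ k) (x : ZMod (p ^ k)) :
    (p : ZMod (p ^ k)) ∣ x ↔ ¬ IsUnit x := by
  haveI : NeZero (p ^ k) := ⟨(pow_pos hp.pos k).ne'⟩
  constructor
  · rintro ⟨c, rfl⟩ h
    have hpu : IsUnit (p : ZMod (p ^ k)) := isUnit_of_mul_isUnit_left h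
    rw [ZMod.isUnit_prime_iff_not_dvd hp] at hpu
    exact hpu (dvd_pow_self p (by omega))
  · intro h
    have hnc : ¬ x.val.Coprime (p ^ k) := by
      rw [← ZMod.isUnit_iff_coprime]
      rwa [ZMod.natCast_zmod_val x]
    have hpd : p ∣ x.val := by
      by_contra hnd
      exact hnc (Nat.Coprime.pow_right k ((Nat.Prime.coprime_iff_not_dvd hp).mpr hnd).symm)
    obtain ⟨m, hm⟩ := hpd
    have hx : x = ((p * m : ℕ) : ZMod (p ^ k)) := by rw [← hm, ZMod.natCast_zmod_val x]
    rw [hx]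
    push_cast
    exact Dvd.intro _ rfl

/-- the translation trick -/
private lemma sum_eq_zero_of_translate {G : Type*} [AddCommGroup G]
    (A : Finset G) (t : G) (hA : ∀ a, a ∈ A ↔ a + t ∈ A)
    (f : G → ℂ) (c : ℂ) (hc : c ≠ 1)
    (hf : ∀ a ∈ A, f (a + t) = c * f a) :
    ∑ a ∈ A, f a = 0 := by
  have key : ∑ a ∈ A, f (a + t) = ∑ a ∈ A, f a := by
    refine Finset.sum_nbij' (fun a => a + t) (fun a => a - t) ?_ ?_ ?_ ?_ ?_
    · intro a ha; exact (hA a).mp ha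
    · intro a ha
      rw [hA (a - t)]
      simpa using ha
    · intro a _; simp
    · intro a _; simp
    · intro a _; rfl
  have h2 : c * ∑ a ∈ A, f a = ∑ a ∈ A, f a := by
    rw [Finset.mul_sum, ← key]
    exact Finset.sum_congr rfl fun a ha => (hf a ha).symm
  exact eq_zero_of_mul_eq_self_left hc h2

private lemma exists_shift_char_ne_one (hp : p.Prime) (hk : 1 ≤ k)
    (χ : DirichletCharacter ℂ (p ^ k)) (hχ : χ.IsPrimitive) :
    ∃ c₀ : ZMod (p ^ k), χ (1 + (p : ZMod (p ^ k)) ^ (k - 1) * c₀) ≠ 1 := by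
  haveI : NeZero (p ^ k) := ⟨(pow_pos hp.pos k).ne'⟩
  by_contra hcon
  push_neg at hcon
  have hd : p ^ (k - 1) ∣ p ^ k := pow_dvd_pow p (Nat.sub_le k 1)
  have hft : χ.FactorsThrough (p ^ (k - 1)) := by
    rw [DirichletCharacter.factorsThrough_iff_ker_unitsMap hd]
    intro u hu
    rw [MonoidHom.mem_ker] at hu ⊢
    have h1 : ZMod.castHom hd (ZMod (p ^ (k - 1))) ((u : ZMod (p ^ k)) - 1) = 0 := by
      have h2 := congrArg (Units.val) hu
      rw [ZMod.unitsMap_def] at h2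
      simp only [Units.coe_map, MonoidHom.coe_coe, Units.val_one] at h2
      rw [map_sub, h2, map_one, sub_self]
    obtain ⟨t, ht⟩ : ∃ t : ZMod (p ^ k),
        (u : ZMod (p ^ k)) - 1 = (p : ZMod (p ^ k)) ^ (k - 1) * t := by
      set x : ZMod (p ^ k) := (u : ZMod (p ^ k)) - 1 with hx
      have hval : ((x.val : ℕ) : ZMod (p ^ (k - 1))) = 0 := by
        rw [ZMod.natCast_val]
        rw [ZMod.castHom_apply] at h1
        exact h1
      rw [ZMod.natCast_eq_zero_iff] at hval
      obtain ⟨m, hm⟩ := hval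
      refine ⟨(m : ZMod (p ^ k)), ?_⟩
      have hxx : x = ((p ^ (k - 1) * m : ℕ) : ZMod (p ^ k)) := by
        rw [← hm, ZMod.natCast_zmod_val x]
      rw [hxx]; push_cast; ring
    have huv : (u : ZMod (p ^ k)) = 1 + (p : ZMod (p ^ k)) ^ (k - 1) * t := by
      linear_combination ht
    ext
    rw [MulChar.coe_toUnitHom]
    rw [huv]
    exact hcon t
  have hle : χ.conductor ≤ p ^ (k - 1) :=
    Nat.sInf_le ((DirichletCharacter.mem_conductorSet_iff _).mpr hft)
  rw [hχ] at hle
  have hlt : p ^ (k - 1) < p ^ k := Nat.pow_lt_pow_right hp.one_lt (by omega)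
  omega

/-- key sum lemma -/
private lemma sum_char_shift_eq_zero (hp : p.Prime) (hk : 1 ≤ k)
    (χ : DirichletCharacter ℂ (p ^ k)) (j : ℕ) (hj : j ≤ k - 1)
    (c₀ : ZMod (p ^ k)) (hc₀ : χ (1 + (p : ZMod (p ^ k)) ^ (k - 1) * c₀) ≠ 1)
    (A : Finset (ZMod (p ^ k)))
    (hA : ∀ a, a ∈ A ↔ a + (p : ZMod (p ^ k)) ^ (k - 1 - j) * c₀ ∈ A)
    (Hz : ∀ a ∈ A, (p : ZMod (p ^ k)) ^ (k - 1) * c₀ * ((p : ZMod (p ^ k)) ^ j * a) = 0) :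
    ∑ a ∈ A, χ (1 + (p : ZMod (p ^ k)) ^ j * a) = 0 := by
  refine sum_eq_zero_of_translate A _ hA _ _ hc₀ ?_
  intro a ha
  have hpow : (p : ZMod (p ^ k)) ^ j * (p : ZMod (p ^ k)) ^ (k - 1 - j)
      = (p : ZMod (p ^ k)) ^ (k - 1) := by
    rw [← pow_add]; congr 1; omega
  have key : (1 : ZMod (p ^ k)) + (p : ZMod (p ^ k)) ^ j *
        (a + (p : ZMod (p ^ k)) ^ (k - 1 - j) * c₀)
      = (1 + (p : ZMod (p ^ k)) ^ (k - 1) * c₀) * (1 + (p : ZMod (p ^ k)) ^ j * a) := by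
    linear_combination c₀ * hpow - Hz a ha
  rw [key, map_mul]

private lemma sum_units_eq {n : ℕ} [NeZero n] (f : ZMod n → ℂ)
    [DecidablePred (IsUnit : ZMod n → Prop)] :
    ∑ u : (ZMod n)ˣ, f ↑u = ∑ a ∈ Finset.univ.filter (fun a : ZMod n => IsUnit a), f a := by
  refine Finset.sum_bij' (fun u _ => (u : ZMod n))
    (fun a ha => ((Finset.mem_filter.mp ha).2).unit) ?_ ?_ ?_ ?_ ?_
  · intro u _
    simp [Finset.mem_filter, u.isUnit]
  · intro a _; exact Finset.mem_univ _
  · intro u _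
    exact Units.ext (IsUnit.unit_spec _)
  · intro a ha; exact IsUnit.unit_spec _
  · intro u _; rfl

end aux

/- If `χ` is primitive mod `p^k` and `p^i ∥ b` with `i ≤ k - 2`, then
`∑_{a mod p^k} χ(a) conj(χ(a+b)) = 0`. -/
theorem primitive_character_shifted_sum_eq_zero
    (p k : ℕ) (hp : p.Prime) (hk : 1 ≤ k)
    (χ : DirichletCharacter ℂ (p ^ k)) (hχ : χ.IsPrimitive)
    (b : ℤ) (i : ℕ) (hik : i + 2 ≤ k)
    (hdvd : (p : ℤ) ^ i ∣ b) (hndvd : ¬ (p : ℤ) ^ (i + 1) ∣ b) :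
    ∑ a ∈ Finset.range (p ^ k),
      χ (a : ZMod (p ^ k)) *
        (starRingEnd ℂ) (χ ((a : ZMod (p ^ k)) + (b : ZMod (p ^ k)))) = 0 := by
  classical
  haveI : NeZero (p ^ k) := ⟨(pow_pos hp.pos k).ne'⟩
  obtain ⟨c₀, hc₀⟩ := exists_shift_char_ne_one hp hk χ hχ
  set P : ZMod (p ^ k) := (p : ZMod (p ^ k)) with hP
  -- decompose b
  obtain ⟨b', rfl⟩ := hdvd
  have hpb' : ¬ (p : ℤ) ∣ b' := by
    intro hd
    exact hndvd (by rw [pow_succ]; exact mul_dvd_mul_left _ hd)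
  have hb'u : IsUnit ((b' : ℤ) : ZMod (p ^ k)) := by
    by_contra h
    rw [← zmod_dvd_iff_nonunit hp hk] at h
    obtain ⟨c, hc⟩ := h
    apply hpb'
    have h0 : ((b' : ℤ) : ZMod p) = 0 := by
      have h1 := congrArg (ZMod.castHom (dvd_pow_self p (by omega : k ≠ 0)) (ZMod p)) hc
      rw [map_mul, map_natCast, map_intCast] at h1
      rw [h1, ZMod.natCast_self, zero_mul]
    rwa [ZMod.intCast_zmod_eq_zero_iff_dvd] at h0
  set β : ZMod (p ^ k) := (((p : ℤ) ^ i * b' : ℤ) : ZMod (p ^ k)) with hβ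
  have hβ' : β = P ^ i * ((b' : ℤ) : ZMod (p ^ k)) := by
    rw [hβ, hP]; push_cast; ring
  -- the three vanishing sums
  have hP0 : ∀ m : ℕ, k ≤ m → P ^ m = 0 := by
    intro m hm
    rw [hP, ← Nat.cast_pow, ZMod.natCast_eq_zero_iff]
    exact pow_dvd_pow p hm
  have hF : ∑ a : ZMod (p ^ k), χ (1 + P ^ i * a) = 0 := by
    rcases Nat.eq_zero_or_pos i with hi0 | hi1
    · subst hi0
      simp only [pow_zero, one_mul]
      have he : ∑ a : ZMod (p ^ k), χ (1 + a) = ∑ a : ZMod (p ^ k), χ a :=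
        Equiv.sum_comp (Equiv.addLeft (1 : ZMod (p ^ k))) (fun x => χ x)
      rw [he]
      apply MulChar.sum_eq_zero_of_ne_one
      intro h1
      have h2 : DirichletCharacter.conductor (1 : DirichletCharacter ℂ (p ^ k)) = p ^ k :=
        h1 ▸ hχ
      rw [DirichletCharacter.conductor_one] at h2
      have : 1 < p ^ k := Nat.one_lt_pow (by omega) hp.one_lt
      omega
    · refine sum_char_shift_eq_zero hp hk χ i (by omega) c₀ hc₀ _ (by simp) ?_
      intro a _
      have h1 : P ^ (k - 1) * P ^ i = 0 := by
        rw [← pow_add]; exact hP0 _ (by omega)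
      linear_combination c₀ * a * h1
  have hN : ∑ a ∈ Finset.univ.filter (fun a : ZMod (p ^ k) => ¬ IsUnit a),
      χ (1 + P ^ i * a) = 0 := by
    refine sum_char_shift_eq_zero hp hk χ i (by omega) c₀ hc₀ _ ?_ ?_
    · intro a
      simp only [Finset.mem_filter, Finset.mem_univ, true_and]
      rw [← zmod_dvd_iff_nonunit hp hk, ← zmod_dvd_iff_nonunit hp hk]
      have hpt : P ∣ P ^ (k - 1 - i) * c₀ :=
        dvd_mul_of_dvd_left (dvd_pow_self P (by omega)) c₀
      constructor
      · intro hd; exact dvd_add hd hpt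
      · intro hd
        have := dvd_sub hd hpt
        simpa [hP] using this
    · intro a ha
      rw [Finset.mem_filter] at ha
      rw [← zmod_dvd_iff_nonunit hp hk] at ha
      obtain ⟨a', rfl⟩ := ha.2
      have h1 : P ^ (k - 1) * P ^ i * P = 0 := by
        rw [← pow_add, ← pow_succ]; exact hP0 _ (by omega)
      linear_combination c₀ * a' * h1
  have hU : ∑ u : (ZMod (p ^ k))ˣ, χ (1 + P ^ i * ↑u) = 0 := by
    rw [sum_units_eq (fun a : ZMod (p ^ k) => χ (1 + P ^ i * a))]
    have hsplit := Finset.sum_filter_add_sum_filter_not Finset.univ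
      (fun a : ZMod (p ^ k) => IsUnit a) (fun a => χ (1 + P ^ i * a))
    rw [hF] at hsplit
    linear_combination hsplit - hN
  -- now the main computation
  have hrange : ∑ a ∈ Finset.range (p ^ k),
      χ (a : ZMod (p ^ k)) * (starRingEnd ℂ) (χ ((a : ZMod (p ^ k)) + β))
      = ∑ a : ZMod (p ^ k), χ a * (starRingEnd ℂ) (χ (a + β)) := by
    refine Finset.sum_nbij' (fun a => (a : ZMod (p ^ k))) (fun x => x.val) ?_ ?_ ?_ ?_ ?_
    · intro a _; exact Finset.mem_univ _
    · intro x _; exact Finset.mem_range.mpr (ZMod.val_lt x)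
    · intro a ha; exact ZMod.val_natCast_of_lt (Finset.mem_range.mp ha)
    · intro x _; exact ZMod.natCast_zmod_val x
    · intro a _; rfl
  rw [hrange]
  -- kill nonunit terms
  have hzero : ∀ a : ZMod (p ^ k), ¬ IsUnit a →
      χ a * (starRingEnd ℂ) (χ (a + β)) = 0 := by
    intro a ha
    rw [χ.map_nonunit ha, zero_mul]
  have hsplit := Finset.sum_filter_add_sum_filter_not Finset.univ
    (fun a : ZMod (p ^ k) => IsUnit a) (fun a => χ a * (starRingEnd ℂ) (χ (a + β)))
  have hnonunit : ∑ a ∈ Finset.univ.filter (fun a : ZMod (p ^ k) => ¬ IsUnit a),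
      χ a * (starRingEnd ℂ) (χ (a + β)) = 0 := by
    apply Finset.sum_eq_zero
    intro a ha
    exact hzero a (Finset.mem_filter.mp ha).2
  have hmain : ∑ a ∈ Finset.univ.filter (fun a : ZMod (p ^ k) => IsUnit a),
      χ a * (starRingEnd ℂ) (χ (a + β)) = 0 := by
    rw [← sum_units_eq (fun a : ZMod (p ^ k) => χ a * (starRingEnd ℂ) (χ (a + β)))]
    have hterm : ∀ u : (ZMod (p ^ k))ˣ,
        χ ↑u * (starRingEnd ℂ) (χ (↑u + β))
          = (starRingEnd ℂ) (χ (1 + β * ↑u⁻¹)) := by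
      intro u
      have hsplit2 : (↑u : ZMod (p ^ k)) + β = ↑u * (1 + β * ↑u⁻¹) := by
        linear_combination -β * (u.mul_inv)
      have hnorm : χ ↑u * (starRingEnd ℂ) (χ ↑u) = 1 := by
        rw [Complex.mul_conj, Complex.normSq_eq_norm_sq,
          DirichletCharacter.unit_norm_eq_one χ u]
        norm_num
      rw [hsplit2, map_mul, map_mul]
      rw [← mul_assoc, hnorm, one_mul]
    rw [Finset.sum_congr rfl (fun u _ => hterm u)]
    rw [← map_sum]
    have hinv : ∑ u : (ZMod (p ^ k))ˣ, χ (1 + β * ↑u⁻¹)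
        = ∑ u : (ZMod (p ^ k))ˣ, χ (1 + β * ↑u) :=
      Equiv.sum_comp (Equiv.inv (ZMod (p ^ k))ˣ) (fun u => χ (1 + β * ↑u))
    rw [hinv]
    have hre : ∑ u : (ZMod (p ^ k))ˣ, χ (1 + β * ↑u)
        = ∑ u : (ZMod (p ^ k))ˣ, χ (1 + P ^ i * ↑u) := by
      calc ∑ u : (ZMod (p ^ k))ˣ, χ (1 + β * ↑u)
          = ∑ u : (ZMod (p ^ k))ˣ, χ (1 + P ^ i * ↑(hb'u.unit * u)) := by
            refine Finset.sum_congr rfl fun u _ => ?_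
            congr 1
            rw [Units.val_mul, IsUnit.unit_spec, hβ']
            ring
        _ = ∑ u : (ZMod (p ^ k))ˣ, χ (1 + P ^ i * ↑u) :=
            Equiv.sum_comp (Equiv.mulLeft hb'u.unit) (fun u => χ (1 + P ^ i * ↑u))
    rw [hre, hU, map_zero]
  linear_combination hmain + hnonunit - hsplit
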